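/- Let M ∈ ℕ, let k_1, …, k_M ∈ ℕ, set n = ∏_{i=1}^M k_i, let E ⊆ ℝ be a compact set, and let φ : ℝ → ℝ be a continuous sigmoidal function. For each i = 1, …, M let f_i : ℝ^{k_i} → ℝ be continuous, and let F : ℝ^n → ℝ be the composition F = f̂_M ∘ f̂_{M−1} ∘ ⋯ ∘ f̂_1, where f̂_i denotes the blockwise induced map of f_i on ℝ^{n / (k_1⋯k_{i−1})} (so f̂_i maps ℝ^{n/(k_1⋯k_{i−1})} to ℝ^{n/(k_1⋯k_i)}, and f̂_M = f_M maps ℝ^{k_M} to ℝ). Then for every ε > 0 there exist non-overlapping CNN layers L_1, …, L_M with activation φ, where L_i has kernel length k_i and input dimension n/(k_1⋯k_{i−1}), such that |(L_M ∘ L_{M−1} ∘ ⋯ ∘ L_1)(x) − F(x)| < ε for all x ∈ E^n. -/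

import Mathlib

/-- The `j`-th block (of length `k`) of a vector `x ∈ ℝ^{k·m}`:
`blockVec k m x j = (x_{jk}, x_{jk+1}, …, x_{jk+k-1})`. -/
def blockVec (k m : ℕ) (x : EuclideanSpace ℝ (Fin (k * m))) (j : Fin m) :
    EuclideanSpace ℝ (Fin k) :=
  WithLp.toLp 2 fun (i : Fin k) => x ⟨j.1 * k + i.1, by
    have hi := i.2
    have hj := j.2
    have h1 : j.1 * k + i.1 < (j.1 + 1) * k := by
      rw [add_mul, one_mul]; omega
    have h2 : (j.1 + 1) * k ≤ m * k := Nat.mul_le_mul_right k hj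
    calc j.1 * k + i.1 < (j.1 + 1) * k := h1
      _ ≤ m * k := h2
      _ = k * m := Nat.mul_comm m k⟩

/-- The blockwise induced map `ĥ : ℝ^{k·m} → ℝ^m` of `h : ℝ^k → ℝ`:
`ĥ(x)_j = h(x_j)` where `x_j` is the `j`-th block of length `k`. -/
def blockwise (k m : ℕ) (h : EuclideanSpace ℝ (Fin k) → ℝ)
    (x : EuclideanSpace ℝ (Fin (k * m))) : EuclideanSpace ℝ (Fin m) :=
  WithLp.toLp 2 fun (j : Fin m) => h (blockVec k m x j)

/-- Composition `f̂_M ∘ ⋯ ∘ f̂_1 : ℝ^{k_1⋯k_M} → ℝ` of the blockwise induced maps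
of the scalar functions `f i : ℝ^{k_i} → ℝ`, for a list `ks = [k_1, …, k_M]` of
kernel lengths (for the empty list it is `x ↦ x_0 : ℝ^1 → ℝ`). -/
def blockComp : (ks : List ℕ) →
    ((i : Fin ks.length) → EuclideanSpace ℝ (Fin (ks.get i)) → ℝ) →
    EuclideanSpace ℝ (Fin ks.prod) → ℝ
  | [], _ => fun x => x ⟨0, Nat.one_pos⟩
  | k :: ks, f => fun x =>
      blockComp ks (fun i => f i.succ) (blockwise k ks.prod (f ⟨0, Nat.succ_pos _⟩) x)

/-- A one-hidden-layer network function on `ℝ^d` with activation `φ`: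
`g(x) = ∑_{i=1}^q β_i φ(w^i · x + b_i)`. -/
def IsOneHiddenLayerNet (d : ℕ) (φ : ℝ → ℝ)
    (g : EuclideanSpace ℝ (Fin d) → ℝ) : Prop :=
  ∃ (q : ℕ) (β : Fin q → ℝ) (w : Fin q → EuclideanSpace ℝ (Fin d)) (b : Fin q → ℝ),
    ∀ x, g x = ∑ i : Fin q, β i * φ ((inner ℝ (w i) x : ℝ) + b i)



open Filter Set Finset

noncomputable section


lemma sigmoid_bounded {φ : ℝ → ℝ} (hφc : Continuous φ)
    (hφ1 : Tendsto φ atTop (nhds 1)) (hφ0 : Tendsto φ atBot (nhds 0)) :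
    ∃ B : ℝ, 1 ≤ B ∧ ∀ t, |φ t| ≤ B := by
  obtain ⟨a, ha⟩ := eventually_atTop.mp (Metric.tendsto_nhds.mp hφ1 1 one_pos)
  obtain ⟨b, hb⟩ := eventually_atBot.mp (Metric.tendsto_nhds.mp hφ0 1 one_pos)
  obtain ⟨C, hC⟩ := (isCompact_Icc (a := b) (b := a)).exists_bound_of_continuousOn
    hφc.continuousOn
  refine ⟨max 1 (max 2 C), le_max_left _ _, fun t => ?_⟩
  rcases le_total t b with h | h
  · have := hb t h
    rw [Real.dist_eq, sub_zero] at this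
    calc |φ t| ≤ 1 := this.le
      _ ≤ _ := le_max_left _ _
  rcases le_total a t with h' | h'
  · have := ha t h'
    rw [Real.dist_eq] at this
    have h2 : |φ t| ≤ 2 := by
      have h3 := abs_sub_abs_le_abs_sub (φ t) 1
      rw [abs_one] at h3
      linarith
    calc |φ t| ≤ 2 := h2
      _ ≤ max 2 C := le_max_left _ _
      _ ≤ _ := le_max_right _ _
  · have := hC t ⟨h, h'⟩
    rw [Real.norm_eq_abs] at this
    calc |φ t| ≤ C := this
      _ ≤ max 2 C := le_max_right _ _
      _ ≤ _ := le_max_right _ _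

lemma sigmoid_tail {φ : ℝ → ℝ}
    (hφ1 : Tendsto φ atTop (nhds 1)) (hφ0 : Tendsto φ atBot (nhds 0))
    {τ : ℝ} (hτ : 0 < τ) :
    ∃ T : ℝ, 0 < T ∧ (∀ u, T ≤ u → |φ u - 1| ≤ τ) ∧ (∀ u, u ≤ -T → |φ u| ≤ τ) := by
  obtain ⟨a, ha⟩ := eventually_atTop.mp (Metric.tendsto_nhds.mp hφ1 τ hτ)
  obtain ⟨b, hb⟩ := eventually_atBot.mp (Metric.tendsto_nhds.mp hφ0 τ hτ)
  refine ⟨max 1 (max a (-b)), by positivity, fun u hu => ?_, fun u hu => ?_⟩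
  · have : a ≤ u := le_trans (le_trans (le_max_left _ _) (le_max_right _ _)) hu
    have := ha u this
    rw [Real.dist_eq] at this; exact this.le
  · have : u ≤ b := by
      have : -b ≤ max 1 (max a (-b)) := le_trans (le_max_right _ _) (le_max_right _ _)
      linarith
    have := hb u this
    rw [Real.dist_eq, sub_zero] at this; exact this.le


set_option maxHeartbeats 1000000 in
lemma staircase_aux {φ : ℝ → ℝ} (hφc : Continuous φ)
    (hφ1 : Tendsto φ atTop (nhds 1)) (hφ0 : Tendsto φ atBot (nhds 0))
    (h : ℝ → ℝ) (hh : Continuous h) {R : ℝ} (hR : 1 ≤ R) {ε : ℝ} (hε : 0 < ε) :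
    ∃ (q : ℕ) (β lam t : Fin q → ℝ),
      ∀ s ∈ Icc (-R) R, |(∑ i, β i * φ (lam i * s + t i)) - h s| < ε := by
  classical
  have hR0 : 0 < R := lt_of_lt_of_le one_pos hR
  obtain ⟨B, hB1, hB⟩ := sigmoid_bounded hφc hφ1 hφ0
  have hB0 : 0 < B := lt_of_lt_of_le one_pos hB1
  obtain ⟨δ, hδdef⟩ : ∃ δ : ℝ, δ = ε / (4 * (B + 2)) := ⟨_, rfl⟩
  have hδ : 0 < δ := by rw [hδdef]; positivity
  have hucont : UniformContinuousOn h (Icc (-R-1) (R+1)) :=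
    isCompact_Icc.uniformContinuousOn_of_continuous hh.continuousOn
  rw [Metric.uniformContinuousOn_iff] at hucont
  obtain ⟨δ', hδ'pos, hmod⟩ := hucont δ hδ
  obtain ⟨Bh, hBh⟩ := isCompact_Icc.exists_bound_of_continuousOn
    (hh.continuousOn (s := Icc (-R-1) (R+1)))
  have hBh0 : 0 ≤ Bh := le_trans (norm_nonneg _) (hBh (-R-1) ⟨le_refl _, by linarith⟩)
  obtain ⟨D, hDdef⟩ : ∃ D : ℝ, D = 2 * Bh + 1 := ⟨_, rfl⟩
  have hD0 : 0 < D := by rw [hDdef]; positivity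
  -- grid size
  obtain ⟨N, hNdef⟩ : ∃ N : ℕ, N = ⌈2 * R / min δ' 1⌉₊ + 1 := ⟨_, rfl⟩
  have hNpos : 0 < N := by rw [hNdef]; exact Nat.succ_pos _
  have hNR : (0:ℝ) < N := by exact_mod_cast hNpos
  obtain ⟨Δ, hΔdef⟩ : ∃ Δ : ℝ, Δ = 2 * R / N := ⟨_, rfl⟩
  have hΔpos : 0 < Δ := by rw [hΔdef]; positivity
  have hNΔ : (N:ℝ) * Δ = 2 * R := by rw [hΔdef]; field_simp
  have hΔlt : Δ < min δ' 1 := by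
    have hm : (0:ℝ) < min δ' 1 := lt_min hδ'pos one_pos
    have h1 : 2 * R / min δ' 1 < N := by
      have h2 := Nat.le_ceil (2 * R / min δ' 1)
      have h3 : ((⌈2 * R / min δ' 1⌉₊ : ℝ)) < N := by
        rw [hNdef]; push_cast; linarith
      linarith
    rw [hΔdef, div_lt_iff₀ hNR]
    rw [div_lt_iff₀ hm] at h1
    linarith [mul_comm (min δ' 1) (N:ℝ)]
  have hΔδ' : Δ < δ' := lt_of_lt_of_le hΔlt (min_le_left _ _)
  have hΔ1 : Δ ≤ 1 := le_of_lt (lt_of_lt_of_le hΔlt (min_le_right _ _))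
  -- grid points, midpoints, coefficients
  obtain ⟨sp, hsp⟩ : ∃ sp : ℕ → ℝ, ∀ j, sp j = -R + j * Δ := ⟨_, fun _ => rfl⟩
  obtain ⟨mp, hmp⟩ : ∃ mp : ℕ → ℝ, ∀ j, mp j = sp j - Δ/2 := ⟨_, fun _ => rfl⟩
  obtain ⟨c, hc0, hcS⟩ : ∃ c : ℕ → ℝ, c 0 = h (sp 0) ∧
      ∀ j : ℕ, c (j+1) = h (sp (j+1)) - h (sp j) :=
    ⟨fun j => match j with | 0 => h (sp 0) | (n+1) => h (sp (n+1)) - h (sp n),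
      rfl, fun _ => rfl⟩
  have hsp0 : sp 0 = -R := by rw [hsp]; push_cast; ring
  have hspN : sp N = R := by rw [hsp]; linarith [hNΔ]
  have hspdiff : ∀ j : ℕ, sp (j+1) - sp j = Δ := by
    intro j; rw [hsp, hsp]; push_cast; ring
  have hsp_mem : ∀ j : ℕ, j ≤ N → sp j ∈ Icc (-R-1) (R+1) := by
    intro j hj
    have hj' : (j:ℝ) ≤ N := by exact_mod_cast hj
    have h1 : (0:ℝ) ≤ (j:ℝ) * Δ := by positivity
    have h2 : (j:ℝ) * Δ ≤ N * Δ := mul_le_mul_of_nonneg_right hj' hΔpos.le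
    rw [hsp]
    constructor
    · linarith
    · linarith [hNΔ]
  have hc_bound : ∀ j : ℕ, j ≤ N → |c j| ≤ D := by
    intro j hj
    have hb : ∀ i : ℕ, i ≤ N → |h (sp i)| ≤ Bh := by
      intro i hi
      have := hBh (sp i) (hsp_mem i hi)
      rwa [Real.norm_eq_abs] at this
    cases j with
    | zero =>
        rw [hc0]
        calc |h (sp 0)| ≤ Bh := hb 0 (Nat.zero_le _)
          _ ≤ D := by rw [hDdef]; linarith
    | succ n =>
        rw [hcS]
        calc |h (sp (n+1)) - h (sp n)| ≤ |h (sp (n+1))| + |h (sp n)| := abs_sub _ _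
          _ ≤ Bh + Bh := add_le_add (hb _ hj) (hb n (by omega))
          _ ≤ D := by rw [hDdef]; linarith
  have hc_small : ∀ j : ℕ, 1 ≤ j → j ≤ N → |c j| ≤ δ := by
    intro j hj1 hjN
    obtain ⟨n, rfl⟩ := Nat.exists_eq_add_of_le hj1
    rw [Nat.add_comm 1 n, hcS]
    have hd : dist (sp (n+1)) (sp n) < δ' := by
      rw [Real.dist_eq, hspdiff, abs_of_pos hΔpos]; exact hΔδ'
    have := hmod (sp (n+1)) (hsp_mem _ (by omega)) (sp n) (hsp_mem n (by omega)) hd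
    rw [Real.dist_eq] at this
    exact this.le
  -- tail threshold and slope
  obtain ⟨τ, hτdef⟩ : ∃ τ : ℝ, τ = ε / (4 * (N+1) * D) := ⟨_, rfl⟩
  have hτ0 : 0 < τ := by rw [hτdef]; positivity
  obtain ⟨T, hT0, hTtop, hTbot⟩ := sigmoid_tail hφ1 hφ0 hτ0
  obtain ⟨lam, hlamdef⟩ : ∃ lam : ℝ, lam = 4 * T / Δ := ⟨_, rfl⟩
  have hlam0 : 0 < lam := by rw [hlamdef]; positivity
  have hlamΔ : lam * (Δ/4) = T := by rw [hlamdef]; field_simp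
  refine ⟨N+1, fun j => c j, fun _ => lam, fun j => -(lam * mp j), ?_⟩
  intro s hs
  obtain ⟨hsl, hsr⟩ := hs
  have hsum : (∑ i : Fin (N+1), c i * φ (lam * s + -(lam * mp i)))
      = ∑ j ∈ Finset.range (N+1), c j * φ (lam * (s - mp j)) := by
    rw [Fin.sum_univ_eq_sum_range (fun j => c j * φ (lam * s + -(lam * mp j)))]
    refine Finset.sum_congr rfl fun j _ => ?_
    congr 1
    congr 1
    ring
  rw [hsum]
  have harg0 : (0:ℝ) ≤ (s + R) / Δ + 1/2 := by
    have : 0 ≤ (s + R) / Δ := div_nonneg (by linarith) hΔpos.le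
    linarith
  obtain ⟨J, hJdef⟩ : ∃ J : ℕ, J = ⌊(s + R) / Δ + 1/2⌋₊ := ⟨_, rfl⟩
  have hJle : J ≤ N := by
    have h1 : (s + R) / Δ ≤ N := by
      rw [div_le_iff₀ hΔpos]
      calc s + R ≤ 2 * R := by linarith
        _ = N * Δ := hNΔ.symm
    have h2 : (s + R) / Δ + 1/2 < (N:ℝ) + 1 := by linarith
    have h3 : ⌊(s + R) / Δ + 1/2⌋₊ < N + 1 :=
      (Nat.floor_lt harg0).mpr (by exact_mod_cast h2)
    omega
  have hΔcancel : ((s+R)/Δ + 1/2) * Δ = s + R + Δ/2 := by field_simp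
  have hmem : ∀ j : ℕ, (mp j ≤ s ↔ j ≤ J) := by
    intro j
    have key : mp j ≤ s ↔ (j:ℝ) ≤ (s+R)/Δ + 1/2 := by
      rw [hmp, hsp]
      constructor
      · intro hle
        have h2 : (j:ℝ) * Δ ≤ ((s+R)/Δ + 1/2) * Δ := by rw [hΔcancel]; linarith
        exact le_of_mul_le_mul_right h2 hΔpos
      · intro hle
        have h2 := mul_le_mul_of_nonneg_right hle hΔpos.le
        rw [hΔcancel] at h2
        linarith
    rw [key, hJdef, Nat.le_floor_iff harg0]
  -- telescoping
  have htel : ∀ n : ℕ, ∑ j ∈ Finset.range (n+1), c j = h (sp n) := by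
    intro n
    induction n with
    | zero => simpa using hc0
    | succ n ih => rw [Finset.sum_range_succ, ih, hcS]; ring
  obtain ⟨ind, hind⟩ : ∃ ind : ℕ → ℝ, ∀ j, ind j = if mp j ≤ s then (1:ℝ) else 0 :=
    ⟨_, fun _ => rfl⟩
  have hstep : ∑ j ∈ Finset.range (N+1), c j * ind j = h (sp J) := by
    rw [← htel J]
    have hXY : ∀ j ∈ Finset.range (N+1), c j * ind j
        = if j ∈ Finset.range (J+1) then c j else 0 := by
      intro j _
      rw [hind]
      simp only [Finset.mem_range, Nat.lt_succ_iff, hmem j]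
      by_cases hcJ : j ≤ J <;> simp [hcJ]
    rw [Finset.sum_congr rfl hXY, Finset.sum_ite_mem]
    congr 1
    ext a
    simp only [Finset.mem_inter, Finset.mem_range]
    omega
  have hmpJ : mp J ≤ s := (hmem J).mpr le_rfl
  have hspJ_close : |sp J - s| ≤ Δ := by
    have hlow : sp J - Δ/2 ≤ s := by rw [hmp] at hmpJ; linarith
    have hhigh : s ≤ sp J + Δ/2 := by
      rcases eq_or_lt_of_le hJle with hJN | hJN
      · rw [hJN, hspN]; linarith
      · have h2 : ¬ mp (J+1) ≤ s := by
          intro hle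
          have := (hmem (J+1)).mp hle
          omega
        push_neg at h2
        rw [hmp] at h2
        have := hspdiff J
        linarith
    rw [abs_le]
    constructor <;> linarith
  have hHh : |h (sp J) - h s| ≤ δ := by
    have hd : dist (sp J) s < δ' := by
      rw [Real.dist_eq]
      exact lt_of_le_of_lt hspJ_close hΔδ'
    have := hmod (sp J) (hsp_mem J hJle) s ⟨by linarith, by linarith⟩ hd
    rw [Real.dist_eq] at this
    exact this.le
  -- per-term bound
  have hterm : ∀ j ∈ Finset.range (N+1),
      |c j * (φ (lam * (s - mp j)) - ind j)|
        ≤ if |s - mp j| < Δ/4 then δ * (B+1) else D * τ := by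
    intro j hj
    rw [Finset.mem_range, Nat.lt_succ_iff] at hj
    rw [abs_mul]
    by_cases hnear : |s - mp j| < Δ/4
    · rw [if_pos hnear]
      have hj0 : j ≠ 0 := by
        rintro rfl
        have h1 : s - mp 0 ≥ Δ/2 := by rw [hmp, hsp0]; linarith
        have h2 : |s - mp 0| ≥ Δ/2 := le_trans h1 (le_abs_self _)
        linarith
      have h1 : |c j| ≤ δ := hc_small j (Nat.one_le_iff_ne_zero.mpr hj0) hj
      have h2 : |φ (lam * (s - mp j)) - ind j| ≤ B + 1 := by
        have hφb := hB (lam * (s - mp j))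
        have hib : |ind j| ≤ 1 := by
          rw [hind]; split <;> simp
        calc |φ (lam * (s - mp j)) - ind j|
            ≤ |φ (lam * (s - mp j))| + |ind j| := abs_sub _ _
          _ ≤ B + 1 := add_le_add hφb hib
      exact mul_le_mul h1 h2 (abs_nonneg _) hδ.le
    · rw [if_neg hnear]
      push_neg at hnear
      have h1 : |c j| ≤ D := hc_bound j hj
      have h2 : |φ (lam * (s - mp j)) - ind j| ≤ τ := by
        rcases le_abs.mp hnear with hpos | hneg
        · have hindj : ind j = 1 := by
            rw [hind, if_pos (by linarith : mp j ≤ s)]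
          rw [hindj]
          apply hTtop
          calc T = lam * (Δ/4) := hlamΔ.symm
            _ ≤ lam * (s - mp j) := mul_le_mul_of_nonneg_left hpos hlam0.le
        · have hindj : ind j = 0 := by
            rw [hind, if_neg (by linarith : ¬ mp j ≤ s)]
          rw [hindj, sub_zero]
          apply hTbot
          have h3 : s - mp j ≤ -(Δ/4) := by linarith
          calc lam * (s - mp j) ≤ lam * (-(Δ/4)) :=
                mul_le_mul_of_nonneg_left h3 hlam0.le
            _ = -T := by rw [← hlamΔ]; ring
      exact mul_le_mul h1 h2 (abs_nonneg _) hD0.le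
  -- at most one near index
  have hcard : (Finset.filter (fun j => |s - mp j| < Δ/4) (Finset.range (N+1))).card ≤ 1 := by
    rw [Finset.card_le_one]
    intro a ha b hb
    rw [Finset.mem_filter] at ha hb
    by_contra hab
    have h1 : (1:ℝ) ≤ |(a:ℝ) - b| := by
      have : ((1:ℤ)) ≤ |(a:ℤ) - b| :=
        Int.one_le_abs (sub_ne_zero.mpr (by exact_mod_cast hab))
      exact_mod_cast this
    have h2 : mp a - mp b = ((a:ℝ) - b) * Δ := by
      rw [hmp, hmp, hsp, hsp]; ring
    have h3 : |mp a - mp b| < Δ/2 := by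
      calc |mp a - mp b| = |(mp a - s) + (s - mp b)| := by ring_nf
        _ ≤ |mp a - s| + |s - mp b| := abs_add_le _ _
        _ = |s - mp a| + |s - mp b| := by rw [abs_sub_comm]
        _ < Δ/4 + Δ/4 := add_lt_add ha.2 hb.2
        _ = Δ/2 := by ring
    rw [h2, abs_mul, abs_of_pos hΔpos] at h3
    nlinarith
  -- combine
  have hsum_bound : |∑ j ∈ Finset.range (N+1), c j * (φ (lam * (s - mp j)) - ind j)|
      ≤ δ * (B+1) + ε/4 := by
    calc |∑ j ∈ Finset.range (N+1), c j * (φ (lam * (s - mp j)) - ind j)|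
        ≤ ∑ j ∈ Finset.range (N+1), |c j * (φ (lam * (s - mp j)) - ind j)| :=
          Finset.abs_sum_le_sum_abs _ _
      _ ≤ ∑ j ∈ Finset.range (N+1), if |s - mp j| < Δ/4 then δ * (B+1) else D * τ :=
          Finset.sum_le_sum hterm
      _ ≤ δ * (B+1) + ε/4 := by
          rw [Finset.sum_ite, Finset.sum_const, Finset.sum_const]
          have hle1 : (Finset.filter (fun j => |s - mp j| < Δ/4) (Finset.range (N+1))).card
              • (δ * (B+1)) ≤ 1 * (δ * (B+1)) := by
            rw [nsmul_eq_mul]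
            apply mul_le_mul_of_nonneg_right _ (by positivity)
            exact_mod_cast hcard
          have hle2 : (Finset.filter (fun j => ¬ |s - mp j| < Δ/4) (Finset.range (N+1))).card
              • (D * τ) ≤ ((N:ℝ)+1) * (D * τ) := by
            rw [nsmul_eq_mul]
            apply mul_le_mul_of_nonneg_right _ (by positivity)
            have hcf := Finset.card_filter_le (Finset.range (N+1))
              (fun j => ¬ |s - mp j| < Δ/4)
            rw [Finset.card_range] at hcf
            exact_mod_cast hcf
          have heq : ((N:ℝ)+1) * (D * τ) = ε/4 := by
            rw [hτdef]; field_simp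
          linarith
  have hdecomp : (∑ j ∈ Finset.range (N+1), c j * φ (lam * (s - mp j))) - h s
      = (∑ j ∈ Finset.range (N+1), c j * (φ (lam * (s - mp j)) - ind j))
        + (h (sp J) - h s) := by
    have hsplit2 : ∑ j ∈ Finset.range (N+1), c j * (φ (lam * (s - mp j)) - ind j)
        = (∑ j ∈ Finset.range (N+1), c j * φ (lam * (s - mp j)))
          - ∑ j ∈ Finset.range (N+1), c j * ind j := by
      rw [← Finset.sum_sub_distrib]
      exact Finset.sum_congr rfl fun j _ => by ring
    rw [hsplit2, hstep]
    ring
  rw [hdecomp]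
  calc |(∑ j ∈ Finset.range (N+1), c j * (φ (lam * (s - mp j)) - ind j)) + (h (sp J) - h s)|
      ≤ |∑ j ∈ Finset.range (N+1), c j * (φ (lam * (s - mp j)) - ind j)| + |h (sp J) - h s| :=
        abs_add_le _ _
    _ ≤ (δ * (B+1) + ε/4) + δ := add_le_add hsum_bound hHh
    _ = δ * (B+2) + ε/4 := by ring
    _ = ε/4 + ε/4 := by
        rw [hδdef]; field_simp
    _ < ε := by linarith


lemma staircase {φ : ℝ → ℝ} (hφc : Continuous φ)
    (hφ1 : Tendsto φ atTop (nhds 1)) (hφ0 : Tendsto φ atBot (nhds 0))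
    (h : ℝ → ℝ) (hh : Continuous h) (R : ℝ) {ε : ℝ} (hε : 0 < ε) :
    ∃ (q : ℕ) (β lam t : Fin q → ℝ),
      ∀ s ∈ Icc (-R) R, |(∑ i, β i * φ (lam i * s + t i)) - h s| < ε := by
  obtain ⟨q, β, lam, t, H⟩ := staircase_aux hφc hφ1 hφ0 h hh (le_max_right R 1) hε
  refine ⟨q, β, lam, t, fun s hs => H s ⟨?_, ?_⟩⟩
  · have h1 := hs.1
    have h2 := le_max_left R 1
    linarith
  · exact hs.2.trans (le_max_left R 1)

def netSet (d : ℕ) (φ : ℝ → ℝ) : Set (EuclideanSpace ℝ (Fin d) → ℝ) :=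
  {g | ∃ (w : EuclideanSpace ℝ (Fin d)) (b : ℝ),
    g = fun x => φ ((inner ℝ w x : ℝ) + b)}

lemma isNet_iff {d : ℕ} {φ : ℝ → ℝ} {g : EuclideanSpace ℝ (Fin d) → ℝ} :
    IsOneHiddenLayerNet d φ g ↔ g ∈ Submodule.span ℝ (netSet d φ) := by
  constructor
  · rintro ⟨q, β, w, b, hg⟩
    have hfun : g = ∑ i : Fin q, β i • (fun x => φ ((inner ℝ (w i) x : ℝ) + b i)) := by
      funext x
      rw [hg x, Finset.sum_apply]
      exact Finset.sum_congr rfl fun i _ => rfl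
    rw [hfun]
    exact Submodule.sum_mem _ fun i _ => Submodule.smul_mem _ _
      (Submodule.subset_span ⟨w i, b i, rfl⟩)
  · intro hg
    rw [Submodule.mem_span_set'] at hg
    obtain ⟨n, f, gfun, hsum⟩ := hg
    choose w b hwb using fun i => (gfun i).2
    refine ⟨n, f, w, b, fun x => ?_⟩
    rw [← hsum, Finset.sum_apply]
    exact Finset.sum_congr rfl fun i _ => by rw [hwb i]; rfl

lemma isNet_sum {d : ℕ} {φ : ℝ → ℝ} {n : ℕ} (G : Fin n → EuclideanSpace ℝ (Fin d) → ℝ)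
    (hG : ∀ i, IsOneHiddenLayerNet d φ (G i)) :
    IsOneHiddenLayerNet d φ (fun x => ∑ i, G i x) := by
  rw [isNet_iff]
  have : (fun x => ∑ i, G i x) = ∑ i, G i := by
    funext x; rw [Finset.sum_apply]
  rw [this]
  exact Submodule.sum_mem _ fun i _ => isNet_iff.mp (hG i)

lemma isNet_continuous {d : ℕ} {φ : ℝ → ℝ} (hφc : Continuous φ)
    {g : EuclideanSpace ℝ (Fin d) → ℝ} (hg : IsOneHiddenLayerNet d φ g) :
    Continuous g := by
  obtain ⟨q, β, w, b, hgx⟩ := hg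
  have : g = fun x => ∑ i : Fin q, β i * φ ((inner ℝ (w i) x : ℝ) + b i) := funext hgx
  rw [this]
  refine continuous_finset_sum _ fun i _ => Continuous.mul continuous_const ?_
  exact hφc.comp ((Continuous.inner continuous_const continuous_id).add continuous_const)

/-- Universal approximation for one-hidden-layer sigmoidal networks. -/
lemma uat {φ : ℝ → ℝ} (hφc : Continuous φ)
    (hφ1 : Tendsto φ atTop (nhds 1)) (hφ0 : Tendsto φ atBot (nhds 0))
    {d : ℕ} {K : Set (EuclideanSpace ℝ (Fin d))} (hK : IsCompact K)
    {F : EuclideanSpace ℝ (Fin d) → ℝ} (hF : Continuous F) {ε : ℝ} (hε : 0 < ε) :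
    ∃ g, IsOneHiddenLayerNet d φ g ∧ ∀ x ∈ K, |g x - F x| < ε := by
  classical
  haveI : CompactSpace K := isCompact_iff_compactSpace.mp hK
  -- the submonoid of exponential ridge functions
  let S : Submonoid C(K, ℝ) :=
    { carrier := {f | ∃ w : EuclideanSpace ℝ (Fin d),
        f = ⟨fun x => Real.exp ((inner ℝ w (x : EuclideanSpace ℝ (Fin d)) : ℝ)),
          Real.continuous_exp.comp (Continuous.inner continuous_const continuous_subtype_val)⟩}
      mul_mem' := by
        rintro f g ⟨w, rfl⟩ ⟨v, rfl⟩
        refine ⟨w + v, ?_⟩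
        ext x
        simp [inner_add_left, Real.exp_add]
      one_mem' := by
        refine ⟨0, ?_⟩
        ext x
        simp }
  let A : Subalgebra ℝ C(K, ℝ) := Algebra.adjoin ℝ (S : Set C(K, ℝ))
  have hsep : A.SeparatesPoints := by
    intro x y hxy
    have hne : (x : EuclideanSpace ℝ (Fin d)) ≠ y := fun hc => hxy (Subtype.ext hc)
    set w : EuclideanSpace ℝ (Fin d) := (x : EuclideanSpace ℝ (Fin d)) - y with hw
    refine ⟨_, ⟨_, Algebra.subset_adjoin (⟨w, rfl⟩ : _ ∈ (S : Set C(K,ℝ))), rfl⟩, ?_⟩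
    simp only [ContinuousMap.coe_mk]
    intro hc
    rw [Real.exp_eq_exp] at hc
    have h2 : (inner ℝ w ((x : EuclideanSpace ℝ (Fin d)) - y) : ℝ) = 0 := by
      rw [inner_sub_right, hc]; ring
    rw [hw, real_inner_self_eq_norm_sq] at h2
    have := norm_eq_zero.mp (by nlinarith [norm_nonneg ((x : EuclideanSpace ℝ (Fin d)) - y)] :
      ‖(x : EuclideanSpace ℝ (Fin d)) - y‖ = 0)
    exact hne (sub_eq_zero.mp this)
  have htop := ContinuousMap.subalgebra_topologicalClosure_eq_top_of_separatesPoints A hsep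
  -- F restricted to K
  let FK : C(K, ℝ) := ⟨fun x => F x, hF.comp continuous_subtype_val⟩
  have hFKmem : FK ∈ closure (A : Set C(K, ℝ)) := by
    rw [← Subalgebra.topologicalClosure_coe, htop]; trivial
  obtain ⟨p, hpA, hpd⟩ := Metric.mem_closure_iff.mp hFKmem (ε/2) (by linarith)
  -- p is a linear combination of exponentials
  have hpspan : p ∈ Submodule.span ℝ (S : Set C(K, ℝ)) := by
    have h1 : p ∈ Subalgebra.toSubmodule A := (Subalgebra.mem_toSubmodule A).mpr hpA
    rw [show Subalgebra.toSubmodule A = Submodule.span ℝ (S : Set C(K,ℝ)) by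
      rw [Algebra.adjoin_eq_span, Submonoid.closure_eq]] at h1
    exact h1
  rw [Submodule.mem_span_set'] at hpspan
  obtain ⟨n, a, qf, hqf⟩ := hpspan
  choose w hwf using fun i => (qf i).2
  -- pointwise bound from the sup-norm bound
  have hpoint : ∀ x : K, |(∑ i : Fin n, a i * Real.exp ((inner ℝ (w i) (x : EuclideanSpace ℝ (Fin d)) : ℝ))) - F x| < ε/2 := by
    intro x
    have h1 := ContinuousMap.dist_apply_le_dist (f := FK) (g := p) x
    have h2 : dist (FK x) (p x) < ε/2 := lt_of_le_of_lt h1 hpd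
    have h3 : p x = ∑ i : Fin n, a i * Real.exp ((inner ℝ (w i) (x : EuclideanSpace ℝ (Fin d)) : ℝ)) := by
      rw [← hqf, ContinuousMap.sum_apply]
      refine Finset.sum_congr rfl fun i _ => ?_
      have : ((qf i : C(K,ℝ)) : K → ℝ) x = Real.exp ((inner ℝ (w i) (x : EuclideanSpace ℝ (Fin d)) : ℝ)) := by
        rw [hwf i]; rfl
      rw [ContinuousMap.smul_apply, this, smul_eq_mul]
    rw [Real.dist_eq] at h2
    rw [h3] at h2
    rw [abs_sub_comm]
    exact h2
  -- bound on K
  obtain ⟨C, hC⟩ := isBounded_iff_forall_norm_le.mp hK.isBounded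
  have hC0 : ∀ x ∈ K, 0 ≤ C → True := fun _ _ _ => trivial
  -- staircase approximation of each exponential term
  have hstair : ∀ i : Fin n, ∃ (q : ℕ) (β lam t : Fin q → ℝ),
      ∀ s ∈ Icc (-(‖w i‖ * C + 1)) (‖w i‖ * C + 1),
        |(∑ j, β j * φ (lam j * s + t j)) - a i * Real.exp s| < ε/(2*(n+1)) := by
    intro i
    exact staircase hφc hφ1 hφ0 (fun s => a i * Real.exp s)
      (continuous_const.mul Real.continuous_exp) _ (by positivity)
  choose q β lam t hq using hstair
  refine ⟨fun x => ∑ i : Fin n,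
    ∑ j : Fin (q i), β i j * φ ((inner ℝ (lam i j • w i) x : ℝ) + t i j), ?_, ?_⟩
  · exact isNet_sum _ fun i => ⟨q i, β i, fun j => lam i j • w i, t i, fun x => rfl⟩
  · intro x hx
    have hxC : ‖x‖ ≤ C := hC x hx
    have hterm : ∀ i : Fin n,
        |(∑ j : Fin (q i), β i j * φ ((inner ℝ (lam i j • w i) x : ℝ) + t i j))
          - a i * Real.exp ((inner ℝ (w i) x : ℝ))| < ε/(2*(n+1)) := by
      intro i
      have hmem : (inner ℝ (w i) x : ℝ) ∈ Icc (-(‖w i‖ * C + 1)) (‖w i‖ * C + 1) := by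
        have h1 : |(inner ℝ (w i) x : ℝ)| ≤ ‖w i‖ * ‖x‖ := abs_real_inner_le_norm _ _
        have h2 : ‖w i‖ * ‖x‖ ≤ ‖w i‖ * C := mul_le_mul_of_nonneg_left hxC (norm_nonneg _)
        rw [Set.mem_Icc]
        rw [abs_le] at h1
        constructor <;> [linarith [h1.1]; linarith [h1.2]]
      have := hq i ((inner ℝ (w i) x : ℝ)) hmem
      have harg : ∀ j : Fin (q i), lam i j * (inner ℝ (w i) x : ℝ) + t i j
          = (inner ℝ (lam i j • w i) x : ℝ) + t i j := by
        intro j; rw [real_inner_smul_left]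
      calc |(∑ j : Fin (q i), β i j * φ ((inner ℝ (lam i j • w i) x : ℝ) + t i j))
            - a i * Real.exp ((inner ℝ (w i) x : ℝ))|
          = |(∑ j : Fin (q i), β i j * φ (lam i j * (inner ℝ (w i) x : ℝ) + t i j))
            - a i * Real.exp ((inner ℝ (w i) x : ℝ))| := by
            congr 2
            exact Finset.sum_congr rfl fun j _ => by rw [harg j]
        _ < ε/(2*(n+1)) := this
    calc |(∑ i : Fin n, ∑ j : Fin (q i), β i j * φ ((inner ℝ (lam i j • w i) x : ℝ) + t i j)) - F x|
        = |(∑ i : Fin n, ((∑ j : Fin (q i), β i j * φ ((inner ℝ (lam i j • w i) x : ℝ) + t i j))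
            - a i * Real.exp ((inner ℝ (w i) x : ℝ))))
          + ((∑ i : Fin n, a i * Real.exp ((inner ℝ (w i) x : ℝ))) - F x)| := by
          congr 1
          rw [Finset.sum_sub_distrib]
          ring
      _ ≤ |∑ i : Fin n, ((∑ j : Fin (q i), β i j * φ ((inner ℝ (lam i j • w i) x : ℝ) + t i j))
            - a i * Real.exp ((inner ℝ (w i) x : ℝ)))|
          + |(∑ i : Fin n, a i * Real.exp ((inner ℝ (w i) x : ℝ))) - F x| := abs_add_le _ _
      _ < (∑ i : Fin n, ε/(2*(n+1))) + ε/2 := by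
          apply add_lt_add_of_le_of_lt
          · exact le_trans (Finset.abs_sum_le_sum_abs _ _)
              (Finset.sum_le_sum fun i _ => (hterm i).le)
          · exact hpoint ⟨x, hx⟩
      _ ≤ ε/2 + ε/2 := by
          apply add_le_add_left
          rw [Finset.sum_const, Finset.card_univ, Fintype.card_fin, nsmul_eq_mul]
          rw [← mul_div_assoc, div_le_div_iff₀ (by positivity : (0:ℝ) < 2*((n:ℝ)+1)) (by norm_num : (0:ℝ) < 2)]
          nlinarith [hε.le, (Nat.cast_nonneg n : (0:ℝ) ≤ (n:ℝ))]
      _ = ε := by ring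


lemma blockComp_cons (k : ℕ) (ks : List ℕ)
    (f : (i : Fin (k :: ks).length) → EuclideanSpace ℝ (Fin ((k :: ks).get i)) → ℝ)
    (x : EuclideanSpace ℝ (Fin (k :: ks).prod)) :
    blockComp (k :: ks) f x
      = blockComp ks (fun i => f i.succ)
          (blockwise k ks.prod (f ⟨0, Nat.succ_pos _⟩) x) := rfl

lemma continuous_coord {n : ℕ} (i : Fin n) :
    Continuous fun x : EuclideanSpace ℝ (Fin n) => x i :=
  (EuclideanSpace.proj i).continuous

lemma continuous_blockVec (k m : ℕ) (j : Fin m) :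
    Continuous fun x : EuclideanSpace ℝ (Fin (k*m)) => blockVec k m x j := by
  have h1 : Continuous fun x : EuclideanSpace ℝ (Fin (k*m)) =>
      ((EuclideanSpace.equiv (Fin k) ℝ) (blockVec k m x j)) := by
    apply continuous_pi
    intro i
    simp only [EuclideanSpace.equiv, blockVec]
    exact continuous_coord _
  exact ((EuclideanSpace.equiv (Fin k) ℝ).symm.continuous).comp h1

lemma continuous_blockwise (k m : ℕ) {h : EuclideanSpace ℝ (Fin k) → ℝ}
    (hh : Continuous h) : Continuous (blockwise k m h) := by
  have h1 : Continuous fun x : EuclideanSpace ℝ (Fin (k*m)) =>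
      ((EuclideanSpace.equiv (Fin m) ℝ) (blockwise k m h x)) := by
    apply continuous_pi
    intro j
    simp only [EuclideanSpace.equiv, blockwise]
    exact hh.comp (continuous_blockVec k m j)
  exact ((EuclideanSpace.equiv (Fin m) ℝ).symm.continuous).comp h1

lemma continuous_blockComp : ∀ (ks : List ℕ)
    (f : (i : Fin ks.length) → EuclideanSpace ℝ (Fin (ks.get i)) → ℝ),
    (∀ i, Continuous (f i)) → Continuous (blockComp ks f)
  | [], f, _ => continuous_coord _
  | k :: ks, f, hf => by
      show Continuous fun x => blockComp ks (fun i => f i.succ)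
        (blockwise k ks.prod (f ⟨0, Nat.succ_pos _⟩) x)
      exact (continuous_blockComp ks (fun i => f i.succ) (fun i => hf i.succ)).comp
        (continuous_blockwise k ks.prod (hf ⟨0, Nat.succ_pos _⟩))

lemma cube_compact {d : ℕ} {K : Set ℝ} (hK : IsCompact K) :
    IsCompact {y : EuclideanSpace ℝ (Fin d) | ∀ i, y i ∈ K} := by
  have heq : {y : EuclideanSpace ℝ (Fin d) | ∀ i, y i ∈ K}
      = (EuclideanSpace.equiv (Fin d) ℝ) ⁻¹' (Set.univ.pi fun _ => K) := by
    ext y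
    simp [Set.mem_pi]
  rw [heq]
  exact (EuclideanSpace.equiv (Fin d) ℝ).toHomeomorph.isCompact_preimage.mpr
    (isCompact_univ_pi fun _ => hK)

lemma euclid_dist_le {n : ℕ} (y z : EuclideanSpace ℝ (Fin n)) {r : ℝ} (hr : 0 ≤ r)
    (h : ∀ i, |y i - z i| ≤ r) : dist y z ≤ r * Real.sqrt n := by
  rw [dist_eq_norm, EuclideanSpace.norm_eq]
  have h1 : (∑ i : Fin n, ‖(y - z) i‖ ^ 2) ≤ (n : ℝ) * r ^ 2 := by
    calc (∑ i : Fin n, ‖(y - z) i‖ ^ 2) ≤ ∑ _i : Fin n, r ^ 2 := by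
          apply Finset.sum_le_sum
          intro i _
          have h2 : ‖(y - z) i‖ = |y i - z i| := by
            have h3 : (y - z) i = y i - z i := rfl
            rw [h3, Real.norm_eq_abs]
          rw [h2]
          exact pow_le_pow_left₀ (abs_nonneg _) (h i) 2
      _ = (n:ℝ) * r ^ 2 := by
          rw [Finset.sum_const, Finset.card_univ, Fintype.card_fin, nsmul_eq_mul]
  calc Real.sqrt (∑ i : Fin n, ‖(y - z) i‖ ^ 2) ≤ Real.sqrt ((n:ℝ) * r^2) :=
        Real.sqrt_le_sqrt h1
    _ = r * Real.sqrt (n:ℝ) := by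
        rw [Real.sqrt_mul (Nat.cast_nonneg n), Real.sqrt_sq hr]; ring

lemma blockVec_mem {k m : ℕ} {K : Set ℝ} {x : EuclideanSpace ℝ (Fin (k*m))}
    (hx : ∀ i, x i ∈ K) (j : Fin m) : ∀ i, blockVec k m x j i ∈ K := by
  intro i
  unfold blockVec
  exact hx _

lemma deep_approx {φ : ℝ → ℝ} (hφc : Continuous φ)
    (hφ1 : Tendsto φ atTop (nhds 1)) (hφ0 : Tendsto φ atBot (nhds 0)) :
    ∀ (ks : List ℕ) (K : Set ℝ), IsCompact K →
      ∀ (f : (i : Fin ks.length) → EuclideanSpace ℝ (Fin (ks.get i)) → ℝ),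
      (∀ i, Continuous (f i)) → ∀ {ε : ℝ}, 0 < ε →
    ∃ g : (i : Fin ks.length) → EuclideanSpace ℝ (Fin (ks.get i)) → ℝ,
      (∀ i, IsOneHiddenLayerNet (ks.get i) φ (g i)) ∧
      ∀ x : EuclideanSpace ℝ (Fin ks.prod), (∀ i, x i ∈ K) →
        |blockComp ks g x - blockComp ks f x| < ε := by
  intro ks
  induction ks with
  | nil =>
      intro K hK f hf ε hε
      refine ⟨fun i => i.elim0, fun i => i.elim0, fun x hx => ?_⟩
      show |x ⟨0, Nat.one_pos⟩ - x ⟨0, Nat.one_pos⟩| < ε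
      simpa using hε
  | cons k ks ih =>
      intro K hK f hf ε hε
      have hf0 : Continuous (f ⟨0, Nat.succ_pos _⟩) := hf _
      have hK' : IsCompact {y : EuclideanSpace ℝ (Fin k) | ∀ i, y i ∈ K} := cube_compact hK
      obtain ⟨K2, hK2def⟩ : ∃ K2 : Set ℝ,
          K2 = f ⟨0, Nat.succ_pos _⟩ '' {y | ∀ i, y i ∈ K} := ⟨_, rfl⟩
      have hK2c : IsCompact K2 := hK2def ▸ hK'.image hf0
      obtain ⟨K2', hK2'def⟩ : ∃ K2' : Set ℝ, K2' = Metric.cthickening 1 K2 := ⟨_, rfl⟩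
      have hK2'c : IsCompact K2' := hK2'def ▸ hK2c.cthickening
      obtain ⟨g', hg'net, hg'⟩ := ih K2' hK2'c (fun i => f i.succ) (fun i => hf i.succ)
        (half_pos hε)
      have hG : Continuous (blockComp ks g') :=
        continuous_blockComp ks g' (fun i => isNet_continuous hφc (hg'net i))
      have hcube2 : IsCompact {y : EuclideanSpace ℝ (Fin ks.prod) | ∀ j, y j ∈ K2'} :=
        cube_compact hK2'c
      have hUC := hcube2.uniformContinuousOn_of_continuous hG.continuousOn
      rw [Metric.uniformContinuousOn_iff] at hUC
      obtain ⟨δ, hδpos, hδ⟩ := hUC (ε/2) (half_pos hε)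
      obtain ⟨η, hηdef⟩ : ∃ η : ℝ, η = min 1 (δ / (Real.sqrt ks.prod + 1)) := ⟨_, rfl⟩
      have hηpos : 0 < η := by
        rw [hηdef]
        apply lt_min one_pos
        have : (0:ℝ) ≤ Real.sqrt ks.prod := Real.sqrt_nonneg _
        positivity
      have hη1 : η ≤ 1 := by rw [hηdef]; exact min_le_left _ _
      obtain ⟨g0, hg0net, hg0⟩ := uat hφc hφ1 hφ0 hK' hf0 hηpos
      refine ⟨Fin.cases g0 g', ?_, ?_⟩
      · intro i
        refine Fin.cases ?_ ?_ i
        · exact hg0net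
        · exact hg'net
      · intro x hx
        have hblock : ∀ j : Fin ks.prod,
            blockVec k ks.prod x j ∈ {y : EuclideanSpace ℝ (Fin k) | ∀ i, y i ∈ K} :=
          fun j => blockVec_mem hx j
        obtain ⟨y, hy⟩ : ∃ y, y = blockwise k ks.prod (f ⟨0, Nat.succ_pos _⟩) x := ⟨_, rfl⟩
        obtain ⟨z, hz⟩ : ∃ z, z = blockwise k ks.prod g0 x := ⟨_, rfl⟩
        have hyj : ∀ j, y j ∈ K2 := by
          intro j
          rw [hy, hK2def]
          exact ⟨blockVec k ks.prod x j, hblock j, rfl⟩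
        have hzy : ∀ j, |z j - y j| < η := by
          intro j
          rw [hy, hz]
          show |g0 (blockVec k ks.prod x j) - f ⟨0, Nat.succ_pos _⟩ (blockVec k ks.prod x j)| < η
          exact hg0 _ (hblock j)
        have hyK2' : ∀ j, y j ∈ K2' := by
          intro j
          rw [hK2'def]
          exact Metric.self_subset_cthickening _ (hyj j)
        have hzK2' : ∀ j, z j ∈ K2' := by
          intro j
          rw [hK2'def]
          refine Metric.mem_cthickening_of_dist_le (z j) (y j) 1 _ (hyj j) ?_
          rw [Real.dist_eq]
          linarith [(hzy j).le, hη1]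
        have hdist : dist z y < δ := by
          have h1 : dist z y ≤ η * Real.sqrt ks.prod :=
            euclid_dist_le z y hηpos.le (fun j => (hzy j).le)
          have h2 : η ≤ δ / (Real.sqrt ks.prod + 1) := by
            rw [hηdef]; exact min_le_right _ _
          have h3 : (0:ℝ) ≤ Real.sqrt ks.prod := Real.sqrt_nonneg _
          have h4 : η * Real.sqrt ks.prod ≤ δ / (Real.sqrt ks.prod + 1) * Real.sqrt ks.prod :=
            mul_le_mul_of_nonneg_right h2 h3
          have h5 : δ / (Real.sqrt ks.prod + 1) * Real.sqrt ks.prod < δ := by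
            rw [div_mul_eq_mul_div, div_lt_iff₀ (by positivity)]
            nlinarith
          linarith
        have hGzy : |blockComp ks g' z - blockComp ks g' y| < ε/2 := by
          have := hδ z hzK2' y hyK2' hdist
          rw [Real.dist_eq] at this
          exact this
        have htail : |blockComp ks g' y - blockComp ks (fun i => f i.succ) y| < ε/2 :=
          hg' y hyK2'
        have hgoal1 : blockComp (k :: ks) (Fin.cases g0 g') x = blockComp ks g' z := by
          rw [hz]; rfl
        have hgoal2 : blockComp (k :: ks) f x
            = blockComp ks (fun i => f i.succ) y := by
          rw [hy]; rfl
        rw [hgoal1, hgoal2]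
        calc |blockComp ks g' z - blockComp ks (fun i => f i.succ) y|
            ≤ |blockComp ks g' z - blockComp ks g' y|
              + |blockComp ks g' y - blockComp ks (fun i => f i.succ) y| := abs_sub_le _ _ _
          _ < ε/2 + ε/2 := add_lt_add hGzy htail
          _ = ε := by ring


end

/-- Theorem 2 of the paper: given kernel lengths `k_1, …, k_M`
(`M ≥ 1`), `n = ∏ k_i`, a compact `E ⊆ ℝ`, a continuous sigmoidal `φ`, and
continuous `f_i : ℝ^{k_i} → ℝ`, the composition `F = f̂_M ∘ ⋯ ∘ f̂_1 : ℝ^n → ℝ`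
of the blockwise induced maps can be approximated uniformly on `E^n` by a
composition of non-overlapping CNN layers `L_i = ĝ_i`, where each `g_i` is a
one-hidden-layer network function on `ℝ^{k_i}` with activation `φ`. -/
theorem nonoverlapping_cnn_deep_approx
    (ks : List ℕ) (hM : 0 < ks.length)
    (E : Set ℝ) (hE : IsCompact E)
    (φ : ℝ → ℝ) (hφc : Continuous φ)
    (hφ1 : Filter.Tendsto φ Filter.atTop (nhds 1))
    (hφ0 : Filter.Tendsto φ Filter.atBot (nhds 0))
    (f : (i : Fin ks.length) → EuclideanSpace ℝ (Fin (ks.get i)) → ℝ)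
    (hf : ∀ i, Continuous (f i))
    (ε : ℝ) (hε : 0 < ε) :
    ∃ g : (i : Fin ks.length) → EuclideanSpace ℝ (Fin (ks.get i)) → ℝ,
      (∀ i, IsOneHiddenLayerNet (ks.get i) φ (g i)) ∧
      ∀ x : EuclideanSpace ℝ (Fin ks.prod), (∀ i, x i ∈ E) →
        |blockComp ks g x - blockComp ks f x| < ε := by
  obtain ⟨g, hgnet, hg⟩ := deep_approx hφc hφ1 hφ0 ks E hE f hf hε
  exact ⟨g, hgnet, hg⟩
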